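/- For every ν ∈ ℕ₀ and every n ∈ L_ν, there exists κ ∈ ℕ₀ such that σ₀ · 2^ν/6^κ ≤ n ≤ 2^ν/6^κ; that is, each level set is covered by the slots: L_ν ⊆ ⋃_{κ ∈ ℕ₀} S_{ν,κ}. -/
import Mathlib


/-- The Collatz function (on ℕ; positive integers are preserved). -/
def c (n : ℕ) : ℕ := if Even n then n / 2 else 3 * n + 1

/-- The level set `L ν`: positive integers whose Collatz orbit first reaches 1 after exactly ν steps. -/
def L (ν : ℕ) : Set ℕ := {n | 0 < n ∧ c^[ν] n = 1 ∧ ∀ i < ν, c^[i] n ≠ 1}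

/-- The orbit set `R n = {c^i(n) : i ∈ ℕ₀}`. -/
def R (n : ℕ) : Set ℕ := {k | ∃ i : ℕ, c^[i] n = k}

/-- The orbit steadiness `σ n = ∏_{k ∈ R(n), k ≡ 4 mod 6} (k-1)/k`, as a real number. -/
noncomputable def σ (n : ℕ) : ℝ := ∏ᶠ k ∈ {k ∈ R n | k % 6 = 4}, ((k : ℝ) - 1) / k

/-- The Collatz tree `𝔠`: positive integers whose orbit reaches 1. -/
def 𝔠 : Set ℕ := ⋃ ν : ℕ, L ν

/-- `σ₀` is the infimum of the orbit steadiness over the Collatz tree. -/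
noncomputable def σ₀ : ℝ := sInf (σ '' 𝔠)

/-- The slot `S ν κ = [σ₀ · 2^ν/6^κ, 2^ν/6^κ]` as a real interval. -/
noncomputable def S (ν κ : ℕ) : Set ℝ := Set.Icc (σ₀ * 2 ^ ν / 6 ^ κ) (2 ^ ν / 6 ^ κ)

lemma c_pos {n : ℕ} (h : 0 < n) : 0 < c n := by
  unfold c
  split
  · rename_i he; obtain ⟨m, rfl⟩ := he; omega
  · omega

lemma c3one : c^[3] 1 = 1 := by decide

lemma c3k (k : ℕ) : c^[3 * k] 1 = 1 := by
  induction k with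
  | zero => rfl
  | succ k ih =>
    have h : 3 * (k + 1) = 3 * k + 3 := by ring
    rw [h, Function.iterate_add_apply, c3one, ih]

lemma cmod (t : ℕ) : c^[t] 1 = c^[t % 3] 1 := by
  have h : t = t % 3 + 3 * (t / 3) := by omega
  conv_lhs => rw [h]
  rw [Function.iterate_add_apply, c3k]

lemma key : ∀ ν n, 0 < n → c^[ν] n = 1 → (∀ i < ν, c^[i] n ≠ 1) →
    ∃ κ : ℕ, ∃ A : Finset ℕ, κ ≤ ν ∧
      (∀ k ∈ A, k % 6 = 4 ∧ ∃ i, 1 ≤ i ∧ i ≤ ν ∧ c^[i] n = k) ∧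
      2 ^ (ν - κ) * ∏ k ∈ A, (k - 1) = 3 ^ κ * n * ∏ k ∈ A, k := by
  intro ν
  induction ν with
  | zero =>
    intro n hpos h1 _
    refine ⟨0, ∅, le_refl 0, by simp, ?_⟩
    simp only [Function.iterate_zero_apply] at h1
    simp [h1]
  | succ ν ih =>
    intro n hpos h1 hmin
    have hm1 : c^[ν] (c n) = 1 := by
      rw [← Function.iterate_succ_apply]; exact h1
    have hmpos : 0 < c n := c_pos hpos
    have hmmin : ∀ i < ν, c^[i] (c n) ≠ 1 := by
      intro i hi
      rw [← Function.iterate_succ_apply]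
      exact hmin (i + 1) (by omega)
    obtain ⟨κ, A, hκ, hA, hid⟩ := ih (c n) hmpos hm1 hmmin
    by_cases hpar : Even n
    · refine ⟨κ, A, by omega, ?_, ?_⟩
      · intro k hk
        obtain ⟨h6, i, hi1, hi2, hi3⟩ := hA k hk
        exact ⟨h6, i + 1, by omega, by omega,
          by rw [Function.iterate_succ_apply]; exact hi3⟩
      · have hcn : n = 2 * c n := by
          unfold c; rw [if_pos hpar]
          obtain ⟨r, rfl⟩ := hpar; omega
        have hν : ν + 1 - κ = (ν - κ) + 1 := by omega
        rw [hν, pow_succ]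
        calc 2 ^ (ν - κ) * 2 * ∏ k ∈ A, (k - 1)
            = 2 * (2 ^ (ν - κ) * ∏ k ∈ A, (k - 1)) := by ring
          _ = 2 * (3 ^ κ * c n * ∏ k ∈ A, k) := by rw [hid]
          _ = 3 ^ κ * n * ∏ k ∈ A, k := by
              conv_rhs => rw [hcn]
              ring
    · have hnodd : n % 2 = 1 := Nat.odd_iff.mp (Nat.not_even_iff_odd.mp hpar)
      have hcn : c n = 3 * n + 1 := by unfold c; rw [if_neg hpar]
      have hnotmem : c n ∉ A := by
        intro hmem
        obtain ⟨_, i, hi1, hi2, hi3⟩ := hA (c n) hmem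
        have e1 : c^[i + 1] n = c^[1] n := by
          rw [Function.iterate_succ_apply, Function.iterate_one]; exact hi3
        have e2 : c^[ν - i + 1] n = 1 := by
          have e3 : c^[(ν - i) + (i + 1)] n = c^[ν - i] (c^[i + 1] n) :=
            Function.iterate_add_apply c (ν - i) (i + 1) n
          rw [e1] at e3
          have e4 : c^[(ν - i) + 1] n = c^[ν - i] (c^[1] n) :=
            Function.iterate_add_apply c (ν - i) 1 n
          rw [e4, ← e3]
          have : (ν - i) + (i + 1) = ν + 1 := by omega
          rw [this, h1]
        exact hmin (ν - i + 1) (by omega) e2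
      refine ⟨κ + 1, insert (c n) A, by omega, ?_, ?_⟩
      · intro k hk
        rcases Finset.mem_insert.mp hk with h | h
        · subst h
          refine ⟨by omega, 1, le_refl 1, by omega, Function.iterate_one c ▸ rfl⟩
        · obtain ⟨h6, i, hi1, hi2, hi3⟩ := hA k h
          exact ⟨h6, i + 1, by omega, by omega,
            by rw [Function.iterate_succ_apply]; exact hi3⟩
      · rw [Finset.prod_insert hnotmem, Finset.prod_insert hnotmem]
        have hsub : c n - 1 = 3 * n := by omega
        have hν : ν + 1 - (κ + 1) = ν - κ := by omega
        rw [hν, hsub]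
        calc 2 ^ (ν - κ) * (3 * n * ∏ k ∈ A, (k - 1))
            = 3 * n * (2 ^ (ν - κ) * ∏ k ∈ A, (k - 1)) := by ring
          _ = 3 * n * (3 ^ κ * c n * ∏ k ∈ A, k) := by rw [hid]
          _ = 3 ^ (κ + 1) * n * (c n * ∏ k ∈ A, k) := by ring

lemma Rfin {n ν : ℕ} (h : c^[ν] n = 1) : (R n).Finite := by
  apply Set.Finite.subset ((Finset.range (ν + 3)).image fun i => c^[i] n).finite_toSet
  rintro k ⟨i, rfl⟩
  simp only [Finset.coe_image, Set.mem_image, Finset.mem_coe, Finset.mem_range]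
  by_cases hi : i < ν + 3
  · exact ⟨i, hi, rfl⟩
  · refine ⟨ν + (i - ν) % 3, by omega, ?_⟩
    have e1 : c^[ν + (i - ν) % 3] n = c^[(i - ν) % 3] (c^[ν] n) := by
      rw [Nat.add_comm, Function.iterate_add_apply]
    have e2 : c^[i] n = c^[i - ν] (c^[ν] n) := by
      rw [← Function.iterate_add_apply]
      congr 1
      omega
    rw [e1, e2, h, ← cmod]

lemma σ_nonneg (m : ℕ) : 0 ≤ σ m := by
  refine finprod_cond_nonneg fun k _ => ?_
  rcases Nat.eq_zero_or_pos k with h | h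
  · simp [h]
  · apply div_nonneg _ (by positivity)
    have : (1 : ℝ) ≤ k := by exact_mod_cast h
    linarith

/-- every `n ∈ L ν` lies in some slot `S ν κ`: `L ν` is covered by the slots. -/
theorem stmt_17 (ν : ℕ) (n : ℕ) (hn : n ∈ L ν) :
    ∃ κ : ℕ, σ₀ * 2 ^ ν / 6 ^ κ ≤ (n : ℝ) ∧ (n : ℝ) ≤ 2 ^ ν / 6 ^ κ := by
  obtain ⟨hpos, h1, hmin⟩ := hn
  obtain ⟨κ, A, hκν, hA, hid⟩ := key ν n hpos h1 hmin
  have hBfin : ({k ∈ R n | k % 6 = 4} : Set ℕ).Finite :=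
    (Rfin h1).subset fun k hk => hk.1
  set B := hBfin.toFinset with hB
  have hAsub : A ⊆ B := by
    intro k hk
    obtain ⟨h6, i, _, _, hi3⟩ := hA k hk
    rw [hB, Set.Finite.mem_toFinset]
    exact ⟨⟨i, hi3⟩, h6⟩
  have hB4 : ∀ k ∈ B, 4 ≤ k := by
    intro k hk
    rw [hB, Set.Finite.mem_toFinset] at hk
    have := hk.2
    omega
  have hf01 : ∀ k ∈ B, 0 ≤ ((k : ℝ) - 1) / k ∧ ((k : ℝ) - 1) / k ≤ 1 := by
    intro k hk
    have h4 := hB4 k hk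
    have hk1 : (1 : ℝ) ≤ k := by exact_mod_cast (by omega : 1 ≤ k)
    have hk0 : (0 : ℝ) < k := by linarith
    exact ⟨div_nonneg (by linarith) (le_of_lt hk0), by rw [div_le_one hk0]; linarith⟩
  set P : ℝ := ∏ k ∈ A, ((k : ℝ) - 1) / k with hP
  have hPnn : 0 ≤ P := Finset.prod_nonneg fun k hk => (hf01 k (hAsub hk)).1
  have hPle1 : P ≤ 1 := Finset.prod_le_one (fun k hk => (hf01 k (hAsub hk)).1)
    (fun k hk => (hf01 k (hAsub hk)).2)
  have hQpos : (0 : ℝ) < ∏ k ∈ A, (k : ℝ) := Finset.prod_pos fun k hk => by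
    have := hB4 k (hAsub hk)
    exact_mod_cast (by omega : 0 < k)
  have hprodcast : ((∏ k ∈ A, (k - 1) : ℕ) : ℝ) = ∏ k ∈ A, ((k : ℝ) - 1) := by
    rw [Nat.cast_prod]
    refine Finset.prod_congr rfl fun k hk => ?_
    have h1k : 1 ≤ k := by have := hB4 k (hAsub hk); omega
    rw [Nat.cast_sub h1k, Nat.cast_one]
  have hcast : (2 : ℝ) ^ (ν - κ) * ∏ k ∈ A, ((k : ℝ) - 1)
      = 3 ^ κ * n * ∏ k ∈ A, (k : ℝ) := by
    have h := congrArg (Nat.cast : ℕ → ℝ) hid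
    push_cast at h
    rw [← hprodcast]
    push_cast
    exact h
  have hPQ : ∏ k ∈ A, ((k : ℝ) - 1) = P * ∏ k ∈ A, (k : ℝ) := by
    rw [hP, ← Finset.prod_mul_distrib]
    refine Finset.prod_congr rfl fun k hk => ?_
    have : (k : ℝ) ≠ 0 := by
      have := hB4 k (hAsub hk)
      exact_mod_cast (by omega : k ≠ 0)
    field_simp
  have h3 : (2 : ℝ) ^ (ν - κ) * P = 3 ^ κ * n := by
    apply mul_right_cancel₀ (ne_of_gt hQpos)
    calc (2 : ℝ) ^ (ν - κ) * P * ∏ k ∈ A, (k : ℝ)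
        = 2 ^ (ν - κ) * (P * ∏ k ∈ A, (k : ℝ)) := by ring
      _ = 2 ^ (ν - κ) * ∏ k ∈ A, ((k : ℝ) - 1) := by rw [← hPQ]
      _ = 3 ^ κ * n * ∏ k ∈ A, (k : ℝ) := hcast
  have hpow : (2 : ℝ) ^ κ * 2 ^ (ν - κ) = 2 ^ ν := by
    rw [← pow_add]
    congr 1
    omega
  have h4 : (2 : ℝ) ^ ν * P = 6 ^ κ * n := by
    have h6 : (6 : ℝ) ^ κ = 2 ^ κ * 3 ^ κ := by rw [← mul_pow]; norm_num
    calc (2 : ℝ) ^ ν * P = 2 ^ κ * (2 ^ (ν - κ) * P) := by rw [← hpow]; ring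
      _ = 2 ^ κ * (3 ^ κ * n) := by rw [h3]
      _ = 6 ^ κ * n := by rw [h6]; ring
  have h6pos : (0 : ℝ) < 6 ^ κ := by positivity
  have h2pos : (0 : ℝ) < 2 ^ ν := by positivity
  have hneq : (n : ℝ) = 2 ^ ν * P / 6 ^ κ := by
    field_simp
    linarith [h4]
  have hσeq : σ n = ∏ k ∈ B, ((k : ℝ) - 1) / k := by
    rw [hB]
    exact finprod_mem_eq_finite_toFinset_prod _ hBfin
  have hσleP : σ n ≤ P := by
    rw [hσeq, ← Finset.prod_sdiff hAsub, ← hP]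
    have hle1 : ∏ k ∈ B \ A, ((k : ℝ) - 1) / k ≤ 1 :=
      Finset.prod_le_one (fun k hk => (hf01 k (Finset.mem_sdiff.mp hk).1).1)
        (fun k hk => (hf01 k (Finset.mem_sdiff.mp hk).1).2)
    exact mul_le_of_le_one_left hPnn hle1
  have hbdd : BddBelow (σ '' 𝔠) := by
    refine ⟨0, ?_⟩
    rintro x ⟨m, -, rfl⟩
    exact σ_nonneg m
  have hmem : σ n ∈ σ '' 𝔠 := ⟨n, Set.mem_iUnion.mpr ⟨ν, hpos, h1, hmin⟩, rfl⟩
  have hσ0 : σ₀ ≤ σ n := csInf_le hbdd hmem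
  have hσ0P : σ₀ ≤ P := hσ0.trans hσleP
  refine ⟨κ, ?_, ?_⟩
  · calc σ₀ * 2 ^ ν / 6 ^ κ ≤ 2 ^ ν * P / 6 ^ κ := by
          gcongr ?_ / _
          nlinarith
      _ = n := hneq.symm
  · calc (n : ℝ) = 2 ^ ν * P / 6 ^ κ := hneq
      _ ≤ 2 ^ ν / 6 ^ κ := by
          gcongr ?_ / _
          nlinarith
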